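/- arXiv:1902.05831 — 3 statements merged into one kernel-verified Lean document; each statement's English description precedes it below -/
import Mathlib

section
/- Let n ≥ 1 and let Ω be a finite nonempty subset of the integer lattice graph ℤ^n. Then the multiplicity of 0 as an eigenvalue of the Dirichlet-to-Neumann operator Λ : ℝ^{δΩ} → ℝ^{δΩ} (i.e., the dimension of the kernel of Λ) equals the number of connected components of the graph with vertex set Ω̄ and edge set E(Ω, Ω̄). -/
open scoped ENNReal

namespace SteklovLattice

/-- Adjacency in the integer lattice graph `ℤ^n`. -/
def adj {n : ℕ} (x y : Fin n → ℤ) : Prop := (∑ i, |x i - y i|) = 1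

/-- The vertex boundary `δΩ`. -/
def vb {n : ℕ} (Ω : Set (Fin n → ℤ)) : Set (Fin n → ℤ) :=
  {x | x ∉ Ω ∧ ∃ y ∈ Ω, adj x y}

/-- `Ω̄ = Ω ∪ δΩ`. -/
def cl {n : ℕ} (Ω : Set (Fin n → ℤ)) : Set (Fin n → ℤ) := Ω ∪ vb Ω

/-- The set `δ'Ω` of "bad" boundary vertices: boundary vertices all of whose
neighbours lie in `Ω`. -/
def badVb {n : ℕ} (Ω : Set (Fin n → ℤ)) : Set (Fin n → ℤ) :=
  {x | x ∈ vb Ω ∧ ∀ y, adj x y → y ∈ Ω}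

/-- The graph Laplacian `Δu(x) = ∑_{y ~ x} (u(y) − u(x))`. -/
noncomputable def lap {n : ℕ} (u : (Fin n → ℤ) → ℝ) (x : Fin n → ℤ) : ℝ :=
  ∑ᶠ y ∈ {y | adj x y}, (u y - u x)

/-- The outward normal derivative `∂u/∂n(x) = ∑_{y ∈ Ω, y ~ x} (u(x) − u(y))`. -/
noncomputable def normalDeriv {n : ℕ} (Ω : Set (Fin n → ℤ)) (u : (Fin n → ℤ) → ℝ)
    (x : Fin n → ℤ) : ℝ :=
  ∑ᶠ y ∈ {y | y ∈ Ω ∧ adj x y}, (u x - u y)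

/-- `u` is a harmonic extension of `φ : δΩ → ℝ`: it is harmonic at every point of `Ω`
and agrees with `φ` on `δΩ`. -/
def IsHarmonicExt {n : ℕ} (Ω : Set (Fin n → ℤ)) (φ : ↥(vb Ω) → ℝ)
    (u : (Fin n → ℤ) → ℝ) : Prop :=
  (∀ x ∈ Ω, lap u x = 0) ∧ ∀ (x : Fin n → ℤ) (hx : x ∈ vb Ω), u x = φ ⟨x, hx⟩

open Classical in
/-- A choice of harmonic extension of `φ` (the harmonic extension exists and its values
on `Ω̄` are unique). -/
noncomputable def harmExt {n : ℕ} (Ω : Set (Fin n → ℤ)) (φ : ↥(vb Ω) → ℝ) :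
    (Fin n → ℤ) → ℝ :=
  if h : ∃ u, IsHarmonicExt Ω φ u then h.choose else 0

/-- The Dirichlet-to-Neumann operator `Λφ = ∂u_φ/∂n`. -/
noncomputable def dtn {n : ℕ} (Ω : Set (Fin n → ℤ)) (φ : ↥(vb Ω) → ℝ) : ↥(vb Ω) → ℝ :=
  fun x => normalDeriv Ω (harmExt Ω φ) x

/-- The edge set `E(Ω, Ω̄)` of edges joining a vertex of `Ω` to a vertex of `Ω̄`,
as a set of unordered pairs. -/
def bedges {n : ℕ} (Ω : Set (Fin n → ℤ)) : Set (Sym2 (Fin n → ℤ)) :=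
  {e | ∃ x y, e = s(x, y) ∧ adj x y ∧ x ∈ Ω ∧ y ∈ cl Ω}

/-- The Dirichlet bilinear form `D_Ω(u,v) = ∑_{{x,y} ∈ E(Ω,Ω̄)} (u(x)−u(y))(v(x)−v(y))`. -/
noncomputable def dirichlet {n : ℕ} (Ω : Set (Fin n → ℤ)) (u v : (Fin n → ℤ) → ℝ) : ℝ :=
  ∑ᶠ e ∈ bedges Ω, Sym2.lift ⟨fun x y => (u x - u y) * (v x - v y), fun _ _ => by ring⟩ e

/-- The `k`-th Steklov eigenvalue (1-indexed, with multiplicity, in increasing order) of the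
Dirichlet-to-Neumann operator of `Ω`, defined via the Courant–Fischer min-max principle,
valued in `ℝ≥0∞`; it equals `+∞` for `k > |δΩ|`. -/
noncomputable def steklovEig {n : ℕ} (Ω : Set (Fin n → ℤ)) (k : ℕ) : ℝ≥0∞ :=
  sInf {C : ℝ≥0∞ | ∃ W : Submodule ℝ (↥(vb Ω) → ℝ), Module.finrank ℝ W = k ∧
    ∀ φ ∈ W, ENNReal.ofReal (∑ᶠ x : ↥(vb Ω), dtn Ω φ x * φ x)
      ≤ C * ENNReal.ofReal (∑ᶠ x : ↥(vb Ω), φ x * φ x)}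

/-- `ω_n`, the Lebesgue volume of the unit ball in `ℝ^n`. -/
noncomputable def unitBallVol (n : ℕ) : ℝ :=
  (MeasureTheory.volume (Metric.ball (0 : EuclideanSpace ℝ (Fin n)) 1)).toReal

/-- Embedding of the lattice `ℤ^n` into Euclidean space `ℝ^n`. -/
noncomputable def toEuc {n : ℕ} (x : Fin n → ℤ) : EuclideanSpace ℝ (Fin n) :=
  (EuclideanSpace.equiv (Fin n) ℝ).symm (fun i => (x i : ℝ))

/-- The edge boundary `∂Ω`, represented as ordered pairs
(endpoint in `Ω`, endpoint outside `Ω`); the outside endpoint `p.2` is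
the vertex `P(τ⊥) ∈ δΩ` of the boundary edge `τ = {p.1, p.2}`. -/
def bEdge {n : ℕ} (Ω : Set (Fin n → ℤ)) : Set ((Fin n → ℤ) × (Fin n → ℤ)) :=
  {p | adj p.1 p.2 ∧ p.1 ∈ Ω ∧ p.2 ∉ Ω}

/-- `τ⊥`: the closed `(n−1)`-dimensional unit cube centered at the midpoint of the edge
`{a,b}` and orthogonal to it. -/
def perpCube {n : ℕ} (a b : Fin n → ℤ) : Set (EuclideanSpace ℝ (Fin n)) :=
  {s | ∀ i, |s i - ((a i : ℝ) + (b i : ℝ)) / 2| ≤ 1 / 2 ∧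
      (a i ≠ b i → s i = ((a i : ℝ) + (b i : ℝ)) / 2)}

/-- `Ω̂ = ⋃_{x ∈ Ω} Q₁(x) ⊂ ℝ^n`. -/
def hatSet {n : ℕ} (Ω : Set (Fin n → ℤ)) : Set (EuclideanSpace ℝ (Fin n)) :=
  ⋃ x ∈ Ω, {y : EuclideanSpace ℝ (Fin n) | ∀ i, |y i - (x i : ℝ)| ≤ 1 / 2}

/-- The `(n−1)`-dimensional Hausdorff measure on `ℝ^n`. -/
noncomputable def hMeas (n : ℕ) : MeasureTheory.Measure (EuclideanSpace ℝ (Fin n)) :=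
  MeasureTheory.Measure.hausdorffMeasure ((n : ℝ) - 1)

/-- The graph with vertex set `Ω̄` and edge set `E(Ω, Ω̄)`. -/
def bgraph {n : ℕ} (Ω : Set (Fin n → ℤ)) : SimpleGraph ↥(cl Ω) where
  Adj x y := adj (x : Fin n → ℤ) (y : Fin n → ℤ) ∧ ((x : Fin n → ℤ) ∈ Ω ∨ (y : Fin n → ℤ) ∈ Ω)
  symm := by
    constructor
    rintro x y ⟨h1, h2⟩
    refine ⟨?_, h2.symm⟩
    unfold adj at h1 ⊢
    rw [← h1]
    exact Finset.sum_congr rfl fun i _ => abs_sub_comm _ _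
  loopless := by
    constructor
    rintro x ⟨h1, -⟩
    unfold adj at h1
    simp at h1

open Classical in
/-- Extension of a function on `Ω̄` to the whole lattice by zero. -/
noncomputable def ext {n : ℕ} (Ω : Set (Fin n → ℤ)) (u : ↥(cl Ω) → ℝ) :
    (Fin n → ℤ) → ℝ :=
  fun y => if h : y ∈ cl Ω then u ⟨y, h⟩ else 0

/-- "Good" pairs of boundary edges (edges represented as ordered pairs as in `bEdge`). -/
def goodPairs {n : ℕ} (Ω : Set (Fin n → ℤ)) :
    Set (((Fin n → ℤ) × (Fin n → ℤ)) × ((Fin n → ℤ) × (Fin n → ℤ))) :=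
  {q | q.1 ∈ bEdge Ω ∧ q.2 ∈ bEdge Ω ∧ (q.1.2 ≠ q.2.2 ∨ q.1.2 ∉ badVb Ω)}

section Aux

variable {n : ℕ}

lemma adj_symm {x y : Fin n → ℤ} (h : adj x y) : adj y x := by
  unfold adj at h ⊢
  rw [← h]
  exact Finset.sum_congr rfl fun i _ => abs_sub_comm _ _

lemma nbr_finite (x : Fin n → ℤ) : {y | adj x y}.Finite := by
  apply Set.Finite.subset (Set.Finite.pi (t := fun i => Set.Icc (x i - 1) (x i + 1))
    (fun i => Set.finite_Icc _ _))
  intro y hy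
  have hy' : (∑ i, |x i - y i|) = 1 := hy
  have h1 : ∀ i, |x i - y i| ≤ 1 := by
    intro i
    calc |x i - y i| ≤ ∑ j, |x j - y j| :=
          Finset.single_le_sum (f := fun j => |x j - y j|) (fun j _ => abs_nonneg _)
            (Finset.mem_univ i)
      _ = 1 := hy' 
  intro i _
  have := abs_le.1 (h1 i)
  constructor <;> [linarith [this.2]; linarith [this.1]]

noncomputable def nbrF (x : Fin n → ℤ) : Finset (Fin n → ℤ) := (nbr_finite x).toFinset

lemma mem_nbrF {x y : Fin n → ℤ} : y ∈ nbrF x ↔ adj x y := (nbr_finite x).mem_toFinset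

lemma lap_eq (u : (Fin n → ℤ) → ℝ) (x : Fin n → ℤ) :
    lap u x = ∑ y ∈ nbrF x, (u y - u x) := by
  rw [lap, ← (nbr_finite x).coe_toFinset, finsum_mem_coe_finset]
  rfl

variable {Ω : Set (Fin n → ℤ)}

lemma vb_finite (hfin : Ω.Finite) : (vb Ω).Finite := by
  apply Set.Finite.subset (Set.Finite.biUnion hfin (fun y _ => nbr_finite y))
  rintro x ⟨hx, y, hy, hadj⟩
  exact Set.mem_biUnion hy (adj_symm hadj)

lemma cl_finite (hfin : Ω.Finite) : (cl Ω).Finite := hfin.union (vb_finite hfin)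

lemma adj_mem_cl {x y : Fin n → ℤ} (hx : x ∈ Ω) (h : adj x y) : y ∈ cl Ω := by
  by_cases hy : y ∈ Ω
  · exact Or.inl hy
  · exact Or.inr ⟨hy, x, hx, adj_symm h⟩

open Classical in
noncomputable def bnF (Ω : Set (Fin n → ℤ)) (hfin : Ω.Finite) (x : Fin n → ℤ) :
    Finset (Fin n → ℤ) := hfin.toFinset.filter (fun y => adj x y)

lemma mem_bnF {hfin : Ω.Finite} {x y : Fin n → ℤ} :
    y ∈ bnF Ω hfin x ↔ y ∈ Ω ∧ adj x y := by
  simp [bnF, Finset.mem_filter, hfin.mem_toFinset]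

end Aux
section Shift

variable {n : ℕ}

def shift (hn : 1 ≤ n) (x : Fin n → ℤ) (k : ℕ) : Fin n → ℤ :=
  fun i => x i + if i = ⟨0, hn⟩ then (k : ℤ) else 0

lemma shift_zero (hn : 1 ≤ n) (x : Fin n → ℤ) : shift hn x 0 = x := by
  funext i; simp [shift]

lemma adj_shift (hn : 1 ≤ n) (x : Fin n → ℤ) (k : ℕ) :
    adj (shift hn x k) (shift hn x (k + 1)) := by
  unfold adj
  have h : ∀ i : Fin n, |shift hn x k i - shift hn x (k + 1) i| =
      if i = ⟨0, hn⟩ then 1 else 0 := by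
    intro i
    simp only [shift]
    split
    · push_cast
      rw [show (x i + (k : ℤ)) - (x i + ((k : ℤ) + 1)) = -1 by ring]
      norm_num
    · simp
  rw [Finset.sum_congr rfl (fun i _ => h i), Finset.sum_ite_eq' Finset.univ (⟨0, hn⟩ : Fin n)
    (fun _ => (1 : ℤ))]
  simp

lemma shift_injective (hn : 1 ≤ n) (x : Fin n → ℤ) : Function.Injective (shift hn x) := by
  intro a b h
  have := congrFun h ⟨0, hn⟩
  simp [shift] at this
  exact this

end Shift

section MaxPrinciple

variable {n : ℕ} {Ω : Set (Fin n → ℤ)}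

lemma nonpos_of_harm (hn : 1 ≤ n) (hfin : Ω.Finite) (v : (Fin n → ℤ) → ℝ)
    (hout : ∀ x, x ∉ Ω → v x = 0) (hharm : ∀ x ∈ Ω, lap v x = 0) : ∀ x, v x ≤ 0 := by
  by_contra hc
  push_neg at hc
  obtain ⟨x₁, hx₁⟩ := hc
  have hx₁Ω : x₁ ∈ Ω := by
    by_contra h; rw [hout _ h] at hx₁; linarith
  obtain ⟨x₀, hx₀mem, hx₀max⟩ := Finset.exists_max_image hfin.toFinset v
    ⟨x₁, hfin.mem_toFinset.2 hx₁Ω⟩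
  set M := v x₀ with hM
  have hMpos : 0 < M := lt_of_lt_of_le hx₁ (hx₀max x₁ (hfin.mem_toFinset.2 hx₁Ω))
  have hle : ∀ y, v y ≤ M := by
    intro y
    by_cases hy : y ∈ Ω
    · exact hx₀max y (hfin.mem_toFinset.2 hy)
    · rw [hout y hy]; linarith
  have step : ∀ z, v z = M → ∀ y, adj z y → v y = M := by
    intro z hz y hy
    have hzΩ : z ∈ Ω := by
      by_contra h; rw [hout z h] at hz; linarith
    have h0 := hharm z hzΩ
    rw [lap_eq] at h0
    have hall := (Finset.sum_eq_zero_iff_of_nonpos (fun i _ => by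
      have h1 := hle i; rw [hz]; linarith)).1 h0 y (mem_nbrF.2 hy)
    have : v y - v z = 0 := hall
    linarith [hz.symm ▸ this]
  have hall : ∀ k : ℕ, v (shift hn x₀ k) = M := by
    intro k
    induction k with
    | zero => rw [shift_zero]
    | succ k ih => exact step _ ih _ (adj_shift hn x₀ k)
  refine (Set.infinite_of_injective_forall_mem (shift_injective hn x₀) (fun k => ?_)) hfin
  by_contra h
  have h2 := hall k
  rw [hout _ h] at h2
  linarith

end MaxPrinciple
section Dirichlet

variable {n : ℕ} (Ω : Set (Fin n → ℤ))

open Classical in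
noncomputable def ext0 (v : ↥Ω → ℝ) : (Fin n → ℤ) → ℝ :=
  fun y => if h : y ∈ Ω then v ⟨y, h⟩ else 0

lemma ext0_mem {v : ↥Ω → ℝ} {y : Fin n → ℤ} (h : y ∈ Ω) : ext0 Ω v y = v ⟨y, h⟩ := dif_pos h

lemma ext0_nmem {v : ↥Ω → ℝ} {y : Fin n → ℤ} (h : y ∉ Ω) : ext0 Ω v y = 0 := dif_neg h

lemma ext0_add (v w : ↥Ω → ℝ) : ext0 Ω (v + w) = ext0 Ω v + ext0 Ω w := by
  funext y; by_cases h : y ∈ Ω <;> simp [ext0, h]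

lemma ext0_smul (c : ℝ) (v : ↥Ω → ℝ) : ext0 Ω (c • v) = c • ext0 Ω v := by
  funext y; by_cases h : y ∈ Ω <;> simp [ext0, h]

noncomputable def Lmap : (↥Ω → ℝ) →ₗ[ℝ] (↥Ω → ℝ) where
  toFun v := fun x => ∑ y ∈ nbrF (x : Fin n → ℤ), (v x - ext0 Ω v y)
  map_add' v w := by
    funext x
    simp only [ext0_add, Pi.add_apply]
    rw [← Finset.sum_add_distrib]
    exact Finset.sum_congr rfl fun y _ => by ring
  map_smul' c v := by
    funext x
    simp only [ext0_smul, Pi.smul_apply, smul_eq_mul, RingHom.id_apply]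
    rw [Finset.mul_sum]
    exact Finset.sum_congr rfl fun y _ => by ring

lemma Lmap_apply (v : ↥Ω → ℝ) (x : ↥Ω) :
    Lmap Ω v x = ∑ y ∈ nbrF (x : Fin n → ℤ), (v x - ext0 Ω v y) := rfl

lemma lap_ext0 (v : ↥Ω → ℝ) {x : Fin n → ℤ} (hx : x ∈ Ω) :
    lap (ext0 Ω v) x = -(Lmap Ω v ⟨x, hx⟩) := by
  rw [lap_eq, Lmap_apply]
  rw [Finset.sum_congr rfl (fun y _ => show ext0 Ω v y - ext0 Ω v x
    = -((⟨x, hx⟩ : ↥Ω) |> v) + ext0 Ω v y by rw [ext0_mem Ω hx]; ring)]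
  rw [Finset.sum_add_distrib]
  rw [Finset.sum_neg_distrib]
  rw [neg_add_eq_sub, ← Finset.sum_sub_distrib]
  rw [← Finset.sum_neg_distrib]
  exact Finset.sum_congr rfl fun y _ => by ring

variable {Ω}

lemma Lmap_inj (hn : 1 ≤ n) (hfin : Ω.Finite) : Function.Injective (Lmap Ω) := by
  rw [injective_iff_map_eq_zero]
  intro v hv
  have key : ∀ w : ↥Ω → ℝ, Lmap Ω w = 0 → ∀ x, ext0 Ω w x ≤ 0 := by
    intro w hw
    refine nonpos_of_harm hn hfin _ (fun x hx => ext0_nmem Ω hx) (fun x hx => ?_)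
    rw [lap_ext0 Ω w hx, hw]
    simp
  have h1 := key v hv
  have h2 := key (-v) (by rw [map_neg, hv, neg_zero])
  funext x
  have e1 := h1 (x : Fin n → ℤ)
  have e2 := h2 (x : Fin n → ℤ)
  rw [ext0_mem Ω x.2] at e1
  rw [show ext0 Ω (-v) (x : Fin n → ℤ) = -(v x) by
    rw [ext0_mem Ω x.2]; simp] at e2
  simp only [Pi.zero_apply]
  have : v ⟨(x : Fin n → ℤ), x.2⟩ = v x := by congr
  linarith [this ▸ e1]

lemma harm_exists (hn : 1 ≤ n) (hfin : Ω.Finite) (φ : ↥(vb Ω) → ℝ) :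
    ∃ u, IsHarmonicExt Ω φ u := by
  classical
  letI : Fintype ↥Ω := hfin.fintype
  set φe : (Fin n → ℤ) → ℝ := fun y => if h : y ∈ vb Ω then φ ⟨y, h⟩ else 0 with hφe
  obtain ⟨v, hv⟩ := (LinearMap.injective_iff_surjective.mp (Lmap_inj hn hfin))
    (fun x => ∑ y ∈ nbrF (x : Fin n → ℤ), φe y)
  refine ⟨fun y => ext0 Ω v y + φe y, ?_, ?_⟩
  · intro x hx
    rw [lap_eq]
    have hxv : x ∉ vb Ω := fun h => h.1 hx
    have hx0 : φe x = 0 := dif_neg hxv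
    have h1 : ∑ y ∈ nbrF x, (v ⟨x, hx⟩ - ext0 Ω v y) = ∑ y ∈ nbrF x, φe y := congrFun hv ⟨x, hx⟩
    rw [Finset.sum_congr rfl (fun y _ => show
        (ext0 Ω v y + φe y) - (ext0 Ω v x + φe x) = φe y - (v ⟨x, hx⟩ - ext0 Ω v y) by
      rw [ext0_mem Ω hx, hx0]; ring)]
    rw [Finset.sum_sub_distrib, h1, sub_self]
  · intro x hx
    show ext0 Ω v x + φe x = φ ⟨x, hx⟩
    rw [ext0_nmem Ω hx.1]
    simp [hφe, hx]

lemma harm_unique (hn : 1 ≤ n) (hfin : Ω.Finite) (φ : ↥(vb Ω) → ℝ) {u u' : (Fin n → ℤ) → ℝ}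
    (hu : IsHarmonicExt Ω φ u) (hu' : IsHarmonicExt Ω φ u') :
    ∀ x ∈ cl Ω, u x = u' x := by
  letI : Fintype ↥Ω := hfin.fintype
  set v : ↥Ω → ℝ := fun x => u x - u' x with hvdef
  have key : ∀ y ∈ cl Ω, ext0 Ω v y = u y - u' y := by
    intro y hy
    rcases hy with hy | hy
    · rw [ext0_mem Ω hy]
    · rw [ext0_nmem Ω hy.1, hu.2 y hy, hu'.2 y hy]; ring
  have hL : Lmap Ω v = 0 := by
    funext x
    rw [Lmap_apply]
    have hx := x.2
    rw [Finset.sum_congr rfl (fun y hyn => show v x - ext0 Ω v y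
        = -((u y - u (x : Fin n → ℤ)) - (u' y - u' (x : Fin n → ℤ))) by
      rw [key y (adj_mem_cl hx (mem_nbrF.1 hyn))]
      simp only [hvdef]
      ring)]
    rw [Finset.sum_neg_distrib, Finset.sum_sub_distrib, ← lap_eq, ← lap_eq,
      hu.1 _ hx, hu'.1 _ hx]
    simp
  have hv0 : v = 0 := Lmap_inj hn hfin (by rw [hL, map_zero])
  intro x hx
  rcases hx with hx | hx
  · have := congrFun hv0 ⟨x, hx⟩
    simp only [hvdef, Pi.zero_apply] at this
    linarith
  · rw [hu.2 x hx, hu'.2 x hx]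

lemma dtn_eq (hn : 1 ≤ n) (hfin : Ω.Finite) (φ : ↥(vb Ω) → ℝ) {u : (Fin n → ℤ) → ℝ}
    (hu : IsHarmonicExt Ω φ u) (x : ↥(vb Ω)) :
    dtn Ω φ x = ∑ y ∈ bnF Ω hfin (x : Fin n → ℤ), (u x - u y) := by
  have hex : ∃ w, IsHarmonicExt Ω φ w := ⟨u, hu⟩
  have hharm : IsHarmonicExt Ω φ (harmExt Ω φ) := by
    rw [harmExt, dif_pos hex]
    exact hex.choose_spec
  simp only [dtn, normalDeriv]
  have hset : {y | y ∈ Ω ∧ adj (x : Fin n → ℤ) y} = ↑(bnF Ω hfin (x : Fin n → ℤ)) := by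
    ext y; simp [mem_bnF (hfin := hfin)]
  rw [hset, finsum_mem_coe_finset]
  refine Finset.sum_congr rfl fun y hy => ?_
  obtain ⟨hyΩ, _⟩ := mem_bnF.1 hy
  rw [harm_unique hn hfin φ hharm hu (x : Fin n → ℤ) (Or.inr x.2),
    harm_unique hn hfin φ hharm hu y (Or.inl hyΩ)]

end Dirichlet
section Graph

variable {n : ℕ} {Ω : Set (Fin n → ℤ)}

lemma reach_ind {P : ↥(cl Ω) → Prop} (hP : ∀ a b, (bgraph Ω).Adj a b → P a → P b) :
    ∀ {a b : ↥(cl Ω)}, (bgraph Ω).Reachable a b → P a → P b := by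
  intro a b h
  obtain ⟨w⟩ := h
  induction w with
  | nil => exact id
  | cons h p ih => exact fun pa => ih (hP _ _ h pa)

lemma exists_vb_reach (hn : 1 ≤ n) (hfin : Ω.Finite) (z : ↥(cl Ω)) :
    ∃ x : ↥(cl Ω), (x : Fin n → ℤ) ∈ vb Ω ∧ (bgraph Ω).Reachable z x := by
  rcases z.2 with hz | hz
  swap
  · exact ⟨z, hz, SimpleGraph.Reachable.refl z⟩
  have hex : ∃ k : ℕ, shift hn (z : Fin n → ℤ) k ∉ Ω := by
    by_contra h
    push_neg at h
    exact (Set.infinite_of_injective_forall_mem (shift_injective hn _) h) hfin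
  classical
  set k₀ := Nat.find hex with hk₀def
  have hk₀ : shift hn (z : Fin n → ℤ) k₀ ∉ Ω := Nat.find_spec hex
  have hlt : ∀ j, j < k₀ → shift hn (z : Fin n → ℤ) j ∈ Ω := by
    intro j hj
    by_contra h
    exact (Nat.find_min hex hj) h
  have main : ∀ j, j ≤ k₀ → ∃ h : shift hn (z : Fin n → ℤ) j ∈ cl Ω,
      (bgraph Ω).Reachable z ⟨shift hn (z : Fin n → ℤ) j, h⟩ := by
    intro j
    induction j with
    | zero =>
      intro _
      have hmem : shift hn (z : Fin n → ℤ) 0 ∈ cl Ω := by rw [shift_zero]; exact z.2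
      refine ⟨hmem, ?_⟩
      have hzz : (⟨shift hn (z : Fin n → ℤ) 0, hmem⟩ : ↥(cl Ω)) = z :=
        Subtype.ext (shift_zero hn _)
      rw [hzz]
    | succ j ih =>
      intro hj1
      have hjk : j < k₀ := Nat.lt_of_succ_le hj1
      obtain ⟨hmem, hreach⟩ := ih (le_of_lt hjk)
      have hjΩ : shift hn (z : Fin n → ℤ) j ∈ Ω := hlt j hjk
      have hadj := adj_shift hn (z : Fin n → ℤ) j
      have hmem' : shift hn (z : Fin n → ℤ) (j + 1) ∈ cl Ω := adj_mem_cl hjΩ hadj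
      have hbadj : (bgraph Ω).Adj ⟨shift hn (z : Fin n → ℤ) j, hmem⟩
          ⟨shift hn (z : Fin n → ℤ) (j + 1), hmem'⟩ := ⟨hadj, Or.inl hjΩ⟩
      exact ⟨hmem', hreach.trans hbadj.reachable⟩
  obtain ⟨hmem, hreach⟩ := main k₀ le_rfl
  refine ⟨⟨shift hn (z : Fin n → ℤ) k₀, hmem⟩, ?_, hreach⟩
  rcases hmem with h | h
  · exact absurd h hk₀
  · exact h

lemma harm_const (hn : 1 ≤ n) (hfin : Ω.Finite) (φ : ↥(vb Ω) → ℝ) {u : (Fin n → ℤ) → ℝ}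
    (hu : IsHarmonicExt Ω φ u) (h0 : dtn Ω φ = 0) {a b : ↥(cl Ω)}
    (hab : (bgraph Ω).Reachable a b) : u a = u b := by
  classical
  letI : Fintype ↥(cl Ω) := (cl_finite hfin).fintype
  set A : Finset ↥(cl Ω) := Finset.univ.filter (fun z => (bgraph Ω).Reachable a z) with hA
  have haA : a ∈ A := by
    simp only [hA, Finset.mem_filter, Finset.mem_univ, true_and]
    exact SimpleGraph.Reachable.refl a
  obtain ⟨x₀, hx₀A, hx₀max⟩ := Finset.exists_max_image A (fun z => u (z : Fin n → ℤ)) ⟨a, haA⟩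
  set M := u (x₀ : Fin n → ℤ) with hMdef
  have hmaxA : ∀ z ∈ A, u (z : Fin n → ℤ) ≤ M := hx₀max
  have hreach_x₀ : (bgraph Ω).Reachable a x₀ := by
    have := Finset.mem_filter.1 hx₀A
    exact this.2
  set P : ↥(cl Ω) → Prop := fun z => (bgraph Ω).Reachable a z ∧ u (z : Fin n → ℤ) = M with hPdef
  have hstep : ∀ z y, (bgraph Ω).Adj z y → P z → P y := by
    rintro z y hzy ⟨hz1, hz2⟩
    have hyA : (bgraph Ω).Reachable a y := hz1.trans hzy.reachable
    refine ⟨hyA, ?_⟩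
    by_cases hzΩ : (z : Fin n → ℤ) ∈ Ω
    · have h := hu.1 _ hzΩ
      rw [lap_eq] at h
      have hnp : ∀ w ∈ nbrF (z : Fin n → ℤ), u w - u (z : Fin n → ℤ) ≤ 0 := by
        intro w hw
        have hwcl : w ∈ cl Ω := adj_mem_cl hzΩ (mem_nbrF.1 hw)
        have hwA : (⟨w, hwcl⟩ : ↥(cl Ω)) ∈ A := by
          simp only [hA, Finset.mem_filter, Finset.mem_univ, true_and]
          exact hz1.trans (SimpleGraph.Adj.reachable ⟨mem_nbrF.1 hw, Or.inl hzΩ⟩)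
        have := hmaxA _ hwA
        rw [hz2]
        linarith
      have hy := (Finset.sum_eq_zero_iff_of_nonpos hnp).1 h (y : Fin n → ℤ) (mem_nbrF.2 hzy.1)
      have : u (y : Fin n → ℤ) - u (z : Fin n → ℤ) = 0 := hy
      rw [← hz2]
      linarith
    · have hzvb : (z : Fin n → ℤ) ∈ vb Ω := z.2.resolve_left hzΩ
      have hd : dtn Ω φ ⟨(z : Fin n → ℤ), hzvb⟩ = 0 := by rw [h0]; rfl
      rw [dtn_eq hn hfin φ hu ⟨(z : Fin n → ℤ), hzvb⟩] at hd
      have hnn : ∀ w ∈ bnF Ω hfin (z : Fin n → ℤ), 0 ≤ u (z : Fin n → ℤ) - u w := by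
        intro w hw
        obtain ⟨hwΩ, hwadj⟩ := mem_bnF.1 hw
        have hwcl : w ∈ cl Ω := Or.inl hwΩ
        have hwA : (⟨w, hwcl⟩ : ↥(cl Ω)) ∈ A := by
          simp only [hA, Finset.mem_filter, Finset.mem_univ, true_and]
          exact hz1.trans (SimpleGraph.Adj.reachable ⟨hwadj, Or.inr hwΩ⟩)
        have := hmaxA _ hwA
        rw [hz2]
        linarith
      have hyΩ : (y : Fin n → ℤ) ∈ Ω := hzy.2.resolve_left hzΩ
      have hy := (Finset.sum_eq_zero_iff_of_nonneg hnn).1 hd (y : Fin n → ℤ)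
        (mem_bnF.2 ⟨hyΩ, hzy.1⟩)
      have : u (z : Fin n → ℤ) - u (y : Fin n → ℤ) = 0 := hy
      rw [← hz2]
      linarith
  have hPx₀ : P x₀ := ⟨hreach_x₀, rfl⟩
  have hPb : P b := reach_ind hstep (hreach_x₀.symm.trans hab) hPx₀
  have hPa : P a := reach_ind hstep hreach_x₀.symm hPx₀
  rw [hPa.2, hPb.2]

end Graph
theorem stmt_7 (n : ℕ) (hn : 1 ≤ n) (Ω : Set (Fin n → ℤ)) (hfin : Ω.Finite)
    (hne : Ω.Nonempty) :
    Set.finrank ℝ {φ : ↥(vb Ω) → ℝ | dtn Ω φ = 0} =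
      Nat.card (bgraph Ω).ConnectedComponent := by
  classical
  haveI : Finite ↥(cl Ω) := (cl_finite hfin).to_subtype
  haveI : Finite (bgraph Ω).ConnectedComponent := Quot.finite _
  letI : Fintype (bgraph Ω).ConnectedComponent := Fintype.ofFinite _
  have hvbcl : ∀ x : ↥(vb Ω), (x : Fin n → ℤ) ∈ cl Ω := fun x => Or.inr x.2
  let G : ((bgraph Ω).ConnectedComponent → ℝ) →ₗ[ℝ] (↥(vb Ω) → ℝ) :=
    { toFun := fun f x => f ((bgraph Ω).connectedComponentMk ⟨(x : Fin n → ℤ), hvbcl x⟩),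
      map_add' := fun f g => rfl,
      map_smul' := fun c f => rfl }
  have Gapp : ∀ (f : (bgraph Ω).ConnectedComponent → ℝ) (x : ↥(vb Ω)),
      G f x = f ((bgraph Ω).connectedComponentMk ⟨(x : Fin n → ℤ), hvbcl x⟩) := fun _ _ => rfl
  have hcompsurj : ∀ c : (bgraph Ω).ConnectedComponent,
      ∃ x : ↥(vb Ω), (bgraph Ω).connectedComponentMk ⟨(x : Fin n → ℤ), hvbcl x⟩ = c := by
    intro c
    obtain ⟨z, hz⟩ := c.exists_rep
    obtain ⟨w, hwvb, hreach⟩ := exists_vb_reach hn hfin z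
    refine ⟨⟨(w : Fin n → ℤ), hwvb⟩, ?_⟩
    have hww : (⟨((⟨(w : Fin n → ℤ), hwvb⟩ : ↥(vb Ω)) : Fin n → ℤ), hvbcl _⟩ : ↥(cl Ω)) = w :=
      Subtype.ext rfl
    rw [hww, ← hz]
    exact SimpleGraph.ConnectedComponent.sound hreach.symm
  have hGinj : Function.Injective G := by
    intro f g hfg
    funext c
    obtain ⟨x, hx⟩ := hcompsurj c
    have h1 := congrFun hfg x
    rw [Gapp, Gapp, hx] at h1
    exact h1
  have hset : {φ : ↥(vb Ω) → ℝ | dtn Ω φ = 0} = (LinearMap.range G : Set (↥(vb Ω) → ℝ)) := by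
    ext φ
    simp only [Set.mem_setOf_eq, SetLike.mem_coe, LinearMap.mem_range]
    constructor
    · intro h0
      obtain ⟨u, hu⟩ := harm_exists hn hfin φ
      have hconst : ∀ a b : ↥(cl Ω), (bgraph Ω).Reachable a b →
          u (a : Fin n → ℤ) = u (b : Fin n → ℤ) :=
        fun a b hab => harm_const hn hfin φ hu h0 hab
      refine ⟨Quot.lift (fun z : ↥(cl Ω) => u (z : Fin n → ℤ)) (fun a b hab => hconst a b hab), ?_⟩
      funext x
      show u (((⟨(x : Fin n → ℤ), hvbcl x⟩ : ↥(cl Ω)) : Fin n → ℤ)) = φ x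
      rw [hu.2 (x : Fin n → ℤ) x.2]
    · rintro ⟨f, rfl⟩
      set u : (Fin n → ℤ) → ℝ :=
        fun y => if h : y ∈ cl Ω then f ((bgraph Ω).connectedComponentMk ⟨y, h⟩) else 0 with hudef
      have hharm : IsHarmonicExt Ω (G f) u := by
        constructor
        · intro x hx
          rw [lap_eq]
          apply Finset.sum_eq_zero
          intro y hy
          have hadj := mem_nbrF.1 hy
          have hycl : y ∈ cl Ω := adj_mem_cl hx hadj
          have hxcl : x ∈ cl Ω := Or.inl hx
          have hcomp : (bgraph Ω).connectedComponentMk ⟨y, hycl⟩ =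
              (bgraph Ω).connectedComponentMk ⟨x, hxcl⟩ :=
            SimpleGraph.ConnectedComponent.sound
              (SimpleGraph.Adj.reachable ⟨adj_symm hadj, Or.inr hx⟩)
          rw [show u y = f ((bgraph Ω).connectedComponentMk ⟨y, hycl⟩) from dif_pos hycl,
            show u x = f ((bgraph Ω).connectedComponentMk ⟨x, hxcl⟩) from dif_pos hxcl,
            hcomp, sub_self]
        · intro x hx
          have hxcl : x ∈ cl Ω := Or.inr hx
          rw [show u x = f ((bgraph Ω).connectedComponentMk ⟨x, hxcl⟩) from dif_pos hxcl,
            Gapp]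
      funext x
      rw [dtn_eq hn hfin (G f) hharm x]
      show (∑ y ∈ bnF Ω hfin (x : Fin n → ℤ), (u (x : Fin n → ℤ) - u y)) = 0
      apply Finset.sum_eq_zero
      intro y hy
      obtain ⟨hyΩ, hadj⟩ := mem_bnF.1 hy
      have hycl : y ∈ cl Ω := Or.inl hyΩ
      have hxcl : (x : Fin n → ℤ) ∈ cl Ω := hvbcl x
      have hcomp : (bgraph Ω).connectedComponentMk ⟨(x : Fin n → ℤ), hxcl⟩ =
          (bgraph Ω).connectedComponentMk ⟨y, hycl⟩ :=
        SimpleGraph.ConnectedComponent.sound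
          (SimpleGraph.Adj.reachable ⟨hadj, Or.inr hyΩ⟩)
      rw [show u (x : Fin n → ℤ) = f ((bgraph Ω).connectedComponentMk ⟨(x : Fin n → ℤ), hxcl⟩)
          from dif_pos hxcl,
        show u y = f ((bgraph Ω).connectedComponentMk ⟨y, hycl⟩) from dif_pos hycl,
        hcomp, sub_self]
  rw [Set.finrank, hset, Submodule.span_eq, LinearMap.finrank_range_of_inj hGinj,
    Module.finrank_pi, Nat.card_eq_fintype_card]
end SteklovLattice
end

section
/- For each positive integer R, let Ω_R ⊂ ℤ² be the set Ω_R = {(x,y) ∈ ℤ² : (R = |x| and |y| ≤ R) or (R = |y| and |x| ≤ R)} ∪ {(x,y) ∈ ℤ² : |x| ≤ R−1, |y| ≤ R−1, and x + y is odd}. Then lim_{R→∞} |δ'Ω_R| / |Ω_R| = 1. -/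
open scoped ENNReal

namespace SteklovLattice

section Aux
open Finset

def OmSet (R : ℕ) : Set (Fin 2 → ℤ) :=
  {x | (|x 0| = (R : ℤ) ∧ |x 1| ≤ (R : ℤ)) ∨ (|x 1| = (R : ℤ) ∧ |x 0| ≤ (R : ℤ))} ∪
  {x | |x 0| ≤ (R : ℤ) - 1 ∧ |x 1| ≤ (R : ℤ) - 1 ∧ Odd (x 0 + x 1)}

lemma adj_iff (x y : Fin 2 → ℤ) :
    adj x y ↔ (x 0 - y 0).natAbs + (x 1 - y 1).natAbs = 1 := by
  unfold adj
  rw [Fin.sum_univ_two, Int.abs_eq_natAbs, Int.abs_eq_natAbs]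
  omega

lemma mem_OmSet (R : ℕ) (x : Fin 2 → ℤ) :
    x ∈ OmSet R ↔ (((x 0).natAbs = R ∧ (x 1).natAbs ≤ R) ∨ ((x 1).natAbs = R ∧ (x 0).natAbs ≤ R)
      ∨ (((x 0).natAbs : ℤ) ≤ (R:ℤ) - 1 ∧ ((x 1).natAbs : ℤ) ≤ (R:ℤ) - 1 ∧ (x 0 + x 1) % 2 = 1)) := by
  simp only [OmSet, Set.mem_union, Set.mem_setOf_eq, Int.abs_eq_natAbs, Int.odd_iff]
  omega

lemma badVb_OmSet (R : ℕ) (hR : 1 ≤ R) :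
    badVb (OmSet R) = {x | ((x 0).natAbs : ℤ) ≤ (R:ℤ) - 1 ∧ ((x 1).natAbs : ℤ) ≤ (R:ℤ) - 1
      ∧ (x 0 + x 1) % 2 = 0} := by
  have hR' : (1:ℤ) ≤ (R:ℤ) := by exact_mod_cast hR
  ext x
  simp only [badVb, vb, Set.mem_setOf_eq]
  constructor
  · rintro ⟨⟨hx, -⟩, hall⟩
    rw [mem_OmSet] at hx
    have h1 := hall ![x 0 + 1, x 1] (by rw [adj_iff]; simp)
    have h2 := hall ![x 0 - 1, x 1] (by rw [adj_iff]; simp)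
    have h3 := hall ![x 0, x 1 + 1] (by rw [adj_iff]; simp)
    have h4 := hall ![x 0, x 1 - 1] (by rw [adj_iff]; simp)
    rw [mem_OmSet] at h1 h2 h3 h4
    simp only [Matrix.cons_val_zero, Matrix.cons_val_one, Matrix.head_cons] at h1 h2 h3 h4
    omega
  · rintro ⟨h0, h1, h2⟩
    refine ⟨⟨?_, ⟨![x 0 + 1, x 1], ?_, by rw [adj_iff]; simp⟩⟩, ?_⟩
    · rw [mem_OmSet]; omega
    · rw [mem_OmSet]
      simp only [Matrix.cons_val_zero, Matrix.cons_val_one, Matrix.head_cons]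
      omega
    · intro y hy
      rw [adj_iff] at hy
      rw [mem_OmSet]
      omega


open Finset

noncomputable def sqF (m : ℤ) : Finset (ℤ×ℤ) := Icc (-m) m ×ˢ Icc (-m) m
noncomputable def EvF (m : ℤ) : Finset ℤ := (Icc (-m) m).filter (fun x => x % 2 = 0)
noncomputable def OdF (m : ℤ) : Finset ℤ := (Icc (-m) m).filter (fun x => x % 2 = 1)

lemma evF_card (m : ℤ) (h : 0 ≤ m) : (EvF m).card = (2*(m/2)+1).toNat := by
  have : EvF m = (Finset.Icc (-(m/2)) (m/2)).image (fun k => 2*k) := by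
    ext y
    simp only [EvF, Finset.mem_filter, Finset.mem_Icc, Finset.mem_image]
    constructor
    · rintro ⟨⟨h1, h2⟩, h3⟩; exact ⟨y/2, by omega, by omega⟩
    · rintro ⟨k, hk, rfl⟩; omega
  rw [this, Finset.card_image_of_injective _ (fun a b h => by omega), Int.card_Icc]
  omega

lemma odF_card (m : ℤ) (h : 0 ≤ m) : (OdF m).card = (2*((m+1)/2)).toNat := by
  have : OdF m = (Finset.Icc (-((m+1)/2)) ((m-1)/2)).image (fun k => 2*k+1) := by
    ext y
    simp only [OdF, Finset.mem_filter, Finset.mem_Icc, Finset.mem_image]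
    constructor
    · rintro ⟨⟨h1, h2⟩, h3⟩; exact ⟨(y-1)/2, by omega, by omega⟩
    · rintro ⟨k, hk, rfl⟩; omega
  rw [this, Finset.card_image_of_injective _ (fun a b h => by omega), Int.card_Icc]
  omega

lemma sqF_card (m : ℤ) (h : 0 ≤ m) : (sqF m).card = (2*m+1).toNat * (2*m+1).toNat := by
  rw [sqF, Finset.card_product, Int.card_Icc]
  have : ((m + 1) - (-m)).toNat = (2*m+1).toNat := by omega
  rw [this]

lemma card_even_sq (m : ℤ) (h : 0 ≤ m) :
    ((sqF m).filter (fun p => (p.1 + p.2) % 2 = 0)).card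
      = (2*(m/2)+1).toNat * (2*(m/2)+1).toNat + (2*((m+1)/2)).toNat * (2*((m+1)/2)).toNat := by
  have hd : (sqF m).filter (fun p => (p.1 + p.2) % 2 = 0) = EvF m ×ˢ EvF m ∪ OdF m ×ˢ OdF m := by
    ext p
    simp only [sqF, EvF, OdF, mem_filter, mem_product, mem_union, mem_Icc]
    omega
  rw [hd, Finset.card_union_of_disjoint, Finset.card_product, Finset.card_product,
    evF_card m h, odF_card m h]
  · rw [Finset.disjoint_left]
    rintro p hp hq
    simp only [EvF, OdF, mem_product, mem_filter] at hp hq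
    omega

lemma card_odd_sq (m : ℤ) (h : 0 ≤ m) :
    ((sqF m).filter (fun p => (p.1 + p.2) % 2 = 1)).card
      = 2 * ((2*(m/2)+1).toNat * (2*((m+1)/2)).toNat) := by
  have hd : (sqF m).filter (fun p => (p.1 + p.2) % 2 = 1) = EvF m ×ˢ OdF m ∪ OdF m ×ˢ EvF m := by
    ext p
    simp only [sqF, EvF, OdF, mem_filter, mem_product, mem_union, mem_Icc]
    omega
  rw [hd, Finset.card_union_of_disjoint, Finset.card_product, Finset.card_product,
    evF_card m h, odF_card m h]
  · ring
  · rw [Finset.disjoint_left]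
    rintro p hp hq
    simp only [EvF, OdF, mem_product, mem_filter] at hp hq
    omega

def toP (x : Fin 2 → ℤ) : ℤ × ℤ := (x 0, x 1)

lemma toP_inj : Function.Injective toP := by
  intro a b h
  funext i
  fin_cases i
  · exact congrArg Prod.fst h
  · exact congrArg Prod.snd h

lemma ncard_eq (S : Set (Fin 2 → ℤ)) (F : Finset (ℤ×ℤ))
    (h : ∀ x : Fin 2 → ℤ, x ∈ S ↔ (x 0, x 1) ∈ F) : S.ncard = F.card := by
  have himg : toP '' S = ↑F := by
    ext p
    constructor
    · rintro ⟨x, hx, rfl⟩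
      exact (h x).1 hx
    · intro hp
      refine ⟨![p.1, p.2], (h _).2 ?_, by simp [toP]⟩
      simpa using hp
  rw [← Set.ncard_image_of_injective S toP_inj, himg, Set.ncard_coe_finset]

lemma badVb_ncard (S : ℕ) : (badVb (OmSet (S+1))).ncard = 2*(S+1)*S + 1 := by
  rw [badVb_OmSet (S+1) (by omega)]
  rw [ncard_eq _ ((sqF (S:ℤ)).filter (fun p => (p.1 + p.2) % 2 = 0)) (by
    intro x
    simp only [Set.mem_setOf_eq, sqF, mem_filter, mem_product, mem_Icc]
    omega)]
  rw [card_even_sq (S:ℤ) (by omega)]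
  rcases Nat.even_or_odd S with ⟨u, hu⟩ | ⟨u, hu⟩ <;> subst hu
  · have a3 : (2*(((u+u:ℕ):ℤ)/2)+1).toNat = 2*u+1 := by omega
    have a4 : (2*((((u+u:ℕ):ℤ)+1)/2)).toNat = 2*u := by omega
    rw [a3, a4]; ring
  · have a3 : (2*(((2*u+1:ℕ):ℤ)/2)+1).toNat = 2*u+1 := by omega
    have a4 : (2*((((2*u+1:ℕ):ℤ)+1)/2)).toNat = 2*u+2 := by omega
    rw [a3, a4]; ring

lemma OmSet_ncard (S : ℕ) : (OmSet (S+1)).ncard = 2*(S+1)*(S+1) + 6*(S+1) := by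
  have hsub : sqF ((S:ℤ)) ⊆ sqF ((S:ℤ)+1) := by
    apply Finset.product_subset_product <;> exact Finset.Icc_subset_Icc (by omega) (by omega)
  rw [ncard_eq _ ((sqF ((S:ℤ)+1) \ sqF (S:ℤ)) ∪ ((sqF (S:ℤ)).filter (fun p => (p.1+p.2) % 2 = 1))) (by
    intro x
    rw [mem_OmSet]
    simp only [sqF, mem_union, mem_sdiff, mem_filter, mem_product, mem_Icc]
    omega)]
  rw [Finset.card_union_of_disjoint (by
    rw [Finset.disjoint_left]
    rintro p hp hq
    simp only [mem_sdiff] at hp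
    exact hp.2 (Finset.mem_filter.1 hq).1)]
  rw [Finset.card_sdiff_of_subset hsub, sqF_card _ (by omega), sqF_card _ (by omega),
    card_odd_sq (S:ℤ) (by omega)]
  rcases Nat.even_or_odd S with ⟨u, hu⟩ | ⟨u, hu⟩ <;> subst hu
  · have a1 : (2*(((u+u:ℕ):ℤ)+1)+1).toNat = 4*u+3 := by omega
    have a2 : (2*((u+u:ℕ):ℤ)+1).toNat = 4*u+1 := by omega
    have a3 : (2*(((u+u:ℕ):ℤ)/2)+1).toNat = 2*u+1 := by omega
    have a4 : (2*((((u+u:ℕ):ℤ)+1)/2)).toNat = 2*u := by omega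
    rw [a1, a2, a3, a4]
    have hle : (4*u+1)*(4*u+1) ≤ (4*u+3)*(4*u+3) := by nlinarith
    zify [hle]
    ring
  · have a1 : (2*(((2*u+1:ℕ):ℤ)+1)+1).toNat = 4*u+5 := by omega
    have a2 : (2*((2*u+1:ℕ):ℤ)+1).toNat = 4*u+3 := by omega
    have a3 : (2*(((2*u+1:ℕ):ℤ)/2)+1).toNat = 2*u+1 := by omega
    have a4 : (2*((((2*u+1:ℕ):ℤ)+1)/2)).toNat = 2*u+2 := by omega
    rw [a1, a2, a3, a4]
    have hle : (4*u+3)*(4*u+3) ≤ (4*u+5)*(4*u+5) := by nlinarith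
    zify [hle]
    ring


end Aux

theorem stmt_11 (Ω : ℕ → Set (Fin 2 → ℤ))
    (hΩ : ∀ R : ℕ, Ω R =
      {x | (|x 0| = (R : ℤ) ∧ |x 1| ≤ (R : ℤ)) ∨ (|x 1| = (R : ℤ) ∧ |x 0| ≤ (R : ℤ))} ∪
      {x | |x 0| ≤ (R : ℤ) - 1 ∧ |x 1| ≤ (R : ℤ) - 1 ∧ Odd (x 0 + x 1)}) :
    Filter.Tendsto (fun R => ((badVb (Ω R)).ncard : ℝ) / ((Ω R).ncard : ℝ))
      Filter.atTop (nhds 1) := by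
  have hO : ∀ R, Ω R = OmSet R := fun R => hΩ R
  simp only [hO]
  have h4 : Filter.Tendsto (fun R : ℕ => (4:ℝ)/(R:ℝ)) Filter.atTop (nhds 0) :=
    tendsto_const_div_atTop_nhds_zero_nat 4
  have hlow : Filter.Tendsto (fun R : ℕ => 1 - 4/(R:ℝ)) Filter.atTop (nhds 1) := by
    simpa using tendsto_const_nhds.sub h4
  refine tendsto_of_tendsto_of_tendsto_of_le_of_le' hlow tendsto_const_nhds ?_ ?_
  · filter_upwards [Filter.eventually_ge_atTop 1] with R hR
    obtain ⟨S, rfl⟩ := Nat.exists_eq_add_of_le hR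
    have e : 1 + S = S + 1 := Nat.add_comm 1 S
    rw [e, badVb_ncard S, OmSet_ncard S]
    have hx : (0:ℝ) ≤ (S:ℝ) := Nat.cast_nonneg S
    have h1 : (0:ℝ) < (S:ℝ) + 1 := by linarith
    have hb : (0:ℝ) < 2*((S:ℝ)+1)*((S:ℝ)+1)+6*((S:ℝ)+1) := by nlinarith
    have e2 : 1 - 4/((S:ℝ)+1) = ((S:ℝ)-3)/((S:ℝ)+1) := by field_simp; ring
    push_cast
    rw [e2, div_le_div_iff₀ h1 hb]
    nlinarith [hx, sq_nonneg (S:ℝ)]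
  · filter_upwards [Filter.eventually_ge_atTop 1] with R hR
    obtain ⟨S, rfl⟩ := Nat.exists_eq_add_of_le hR
    have e : 1 + S = S + 1 := Nat.add_comm 1 S
    rw [e, badVb_ncard S, OmSet_ncard S]
    have hx : (0:ℝ) ≤ (S:ℝ) := Nat.cast_nonneg S
    have hb : (0:ℝ) < 2*((S:ℝ)+1)*((S:ℝ)+1)+6*((S:ℝ)+1) := by nlinarith
    push_cast
    rw [div_le_one hb]
    nlinarith


end SteklovLattice
end

section
/- Let n ≥ 1, let Ω be a finite subset of the integer lattice graph ℤ^n, and let f : (∂Ω)²_g → δΩ × δΩ be any map such that f(τ₁,τ₂) = (P(τ₁⊥), P(τ₂⊥)) whenever P(τ₁⊥) ≠ P(τ₂⊥), and f(τ₁,τ₂) = (P(τ₁⊥), z) for some z ∈ Q₂(P(τ₁⊥)) ∩ δΩ with z ≠ P(τ₁⊥) whenever P(τ₁⊥) = P(τ₂⊥) ∉ δ'Ω. Then the multiplicity of f is at most 8n²: every point of δΩ × δΩ has at most 8n² preimages under f. -/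
open scoped ENNReal

namespace SteklovLattice

lemma adj_structure {n : ℕ} {a x : Fin n → ℤ} (h : adj a x) :
    ∃ p : Fin n × Bool, a = Function.update x p.1 (x p.1 + if p.2 then 1 else -1) := by
  unfold adj at h
  obtain ⟨i, hi⟩ : ∃ i, a i ≠ x i := by
    by_contra hc
    push_neg at hc
    rw [Finset.sum_eq_zero (fun j _ => by rw [hc j, sub_self, abs_zero])] at h
    exact one_ne_zero h.symm
  have hi1 : 1 ≤ |a i - x i| := Int.one_le_abs (sub_ne_zero.mpr hi)
  have hsplit : |a i - x i| + ∑ j ∈ Finset.univ.erase i, |a j - x j| = 1 := by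
    rw [Finset.add_sum_erase Finset.univ (fun j => |a j - x j|) (Finset.mem_univ i)]
    exact h
  have hge : 0 ≤ ∑ j ∈ Finset.univ.erase i, |a j - x j| :=
    Finset.sum_nonneg fun j _ => abs_nonneg _
  have hrest : ∑ j ∈ Finset.univ.erase i, |a j - x j| = 0 := by linarith
  have hzero : ∀ j, j ≠ i → a j = x j := by
    intro j hj
    have h0 := (Finset.sum_eq_zero_iff_of_nonneg fun j _ => abs_nonneg (a j - x j)).mp hrest j
      (Finset.mem_erase.mpr ⟨hj, Finset.mem_univ j⟩)
    exact sub_eq_zero.mp (abs_eq_zero.mp h0)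
  have habs : |a i - x i| = 1 := by linarith
  rcases (abs_eq (by norm_num : (0:ℤ) ≤ 1)).mp habs with h1 | h1
  · exact ⟨(i, true), funext fun j => by
      by_cases hj : j = i
      · subst hj; rw [Function.update_self]; simp; linarith
      · rw [Function.update_of_ne hj]; exact hzero j hj⟩
  · exact ⟨(i, false), funext fun j => by
      by_cases hj : j = i
      · subst hj; rw [Function.update_self]; simp; linarith
      · rw [Function.update_of_ne hj]; exact hzero j hj⟩

/-- The finite set of possible neighbours of a lattice point. -/
def nb {n : ℕ} (x : Fin n → ℤ) : Finset (Fin n → ℤ) :=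
  (Finset.univ : Finset (Fin n × Bool)).image
    (fun p => Function.update x p.1 (x p.1 + if p.2 then 1 else -1))

lemma nb_card {n : ℕ} (x : Fin n → ℤ) : (nb x).card ≤ 2 * n := by
  refine le_trans Finset.card_image_le ?_
  simp [Finset.card_univ]
  omega

lemma mem_nb {n : ℕ} {a x : Fin n → ℤ} (h : adj a x) : a ∈ nb x := by
  obtain ⟨p, hp⟩ := adj_structure h
  exact Finset.mem_image.mpr ⟨p, Finset.mem_univ p, hp.symm⟩

theorem stmt_15 (n : ℕ) (hn : 1 ≤ n) (Ω : Set (Fin n → ℤ)) (hfin : Ω.Finite)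
    (f : ((Fin n → ℤ) × (Fin n → ℤ)) × ((Fin n → ℤ) × (Fin n → ℤ)) →
      (Fin n → ℤ) × (Fin n → ℤ))
    (hf1 : ∀ q ∈ goodPairs Ω, q.1.2 ≠ q.2.2 → f q = (q.1.2, q.2.2))
    (hf2 : ∀ q ∈ goodPairs Ω, q.1.2 = q.2.2 →
      (f q).1 = q.1.2 ∧ (f q).2 ∈ vb Ω ∧ (∀ i, |(f q).2 i - q.1.2 i| ≤ 1) ∧
        (f q).2 ≠ q.1.2) :
    ∀ b : (Fin n → ℤ) × (Fin n → ℤ),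
      ({q | q ∈ goodPairs Ω ∧ f q = b}).ncard ≤ 8 * n ^ 2 := by
  classical
  intro b
  set T : Finset (((Fin n → ℤ) × (Fin n → ℤ)) × Bool) :=
    ((nb b.1 ×ˢ nb b.2) ×ˢ {false}) ∪ ((nb b.1 ×ˢ nb b.1) ×ˢ {true}) with hT
  set g : ((Fin n → ℤ) × (Fin n → ℤ)) × ((Fin n → ℤ) × (Fin n → ℤ)) →
      ((Fin n → ℤ) × (Fin n → ℤ)) × Bool :=
    fun q => ((q.1.1, q.2.1), decide (q.1.2 = q.2.2)) with hg
  have key : ∀ q ∈ {q | q ∈ goodPairs Ω ∧ f q = b},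
      (q.1.2 = q.2.2 → q.1.2 = b.1) ∧ (q.1.2 ≠ q.2.2 → q.1.2 = b.1 ∧ q.2.2 = b.2) := by
    rintro q ⟨hq, hfq⟩
    constructor
    · intro he
      have := (hf2 q hq he).1
      rw [hfq] at this
      exact this.symm
    · intro hne
      have := hf1 q hq hne
      rw [hfq] at this
      exact ⟨(congrArg Prod.fst this).symm, (congrArg Prod.snd this).symm⟩
  have hmaps : ∀ q ∈ {q | q ∈ goodPairs Ω ∧ f q = b}, g q ∈ (T : Set _) := by
    rintro q ⟨hq, hfq⟩
    have hk := key q ⟨hq, hfq⟩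
    obtain ⟨h1, h2, -⟩ := hq
    have ha1 : adj q.1.1 q.1.2 := h1.1
    have ha2 : adj q.2.1 q.2.2 := h2.1
    by_cases he : q.1.2 = q.2.2
    · have hb1 : q.1.2 = b.1 := hk.1 he
      have m1 : q.1.1 ∈ nb b.1 := by rw [← hb1]; exact mem_nb ha1
      have m2 : q.2.1 ∈ nb b.1 := by rw [← hb1, he]; exact mem_nb ha2
      simp only [hT, Finset.coe_union, Set.mem_union, hg]
      right
      simp [Finset.mem_product, m1, m2, he]
    · obtain ⟨hb1, hb2⟩ := hk.2 he
      have m1 : q.1.1 ∈ nb b.1 := by rw [← hb1]; exact mem_nb ha1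
      have m2 : q.2.1 ∈ nb b.2 := by rw [← hb2]; exact mem_nb ha2
      simp only [hT, Finset.coe_union, Set.mem_union, hg]
      left
      simp [Finset.mem_product, m1, m2, he]
  have hinj : Set.InjOn g {q | q ∈ goodPairs Ω ∧ f q = b} := by
    rintro q hq q' hq' hgq
    have hk := key q hq
    have hk' := key q' hq'
    simp only [hg, Prod.mk.injEq] at hgq
    obtain ⟨⟨e1, e2⟩, e3⟩ := hgq
    have e3' : (q.1.2 = q.2.2) ↔ (q'.1.2 = q'.2.2) := by
      constructor <;> intro h <;> simpa [h] using (by simpa [h] using e3 : _)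
    by_cases he : q.1.2 = q.2.2
    · have he' : q'.1.2 = q'.2.2 := e3'.mp he
      have b1 := hk.1 he
      have b1' := hk'.1 he'
      have hq12 : q.1.2 = q'.1.2 := by rw [b1, b1']
      refine Prod.ext (Prod.ext e1 hq12) (Prod.ext e2 ?_)
      rw [← he, ← he', hq12]
    · have he' : q'.1.2 ≠ q'.2.2 := fun h => he (e3'.mpr h)
      obtain ⟨b1, b2⟩ := hk.2 he
      obtain ⟨b1', b2'⟩ := hk'.2 he'
      exact Prod.ext (Prod.ext e1 (by rw [b1, b1'])) (Prod.ext e2 (by rw [b2, b2']))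
  have hcard := Set.ncard_le_ncard_of_injOn g hmaps hinj (T.finite_toSet)
  rw [Set.ncard_coe_finset] at hcard
  refine hcard.trans ?_
  have := Finset.card_union_le ((nb b.1 ×ˢ nb b.2) ×ˢ ({false} : Finset Bool))
    ((nb b.1 ×ˢ nb b.1) ×ˢ ({true} : Finset Bool))
  have c1 := nb_card b.1
  have c2 := nb_card b.2
  simp only [Finset.card_product, Finset.card_singleton, mul_one] at this
  refine le_trans this ?_
  nlinarith [Finset.card_product (nb b.1) (nb b.2), Nat.mul_le_mul c1 c2, Nat.mul_le_mul c1 c1]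

end SteklovLattice
end
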